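/- If λ/μ is a k-ribbon with the indices i₀, i₁ as in the characterization ({[μ]_i : i ≠ i₀} = {[λ]_i : i ≠ i₁}, [μ]_{i₀} + k = [λ]_{i₁}), then the height of the ribbon, defined as the difference between the row indices of the squares of [λ/μ] on its first and last diagonal, equals i₀ − i₁. -/

import Mathlib

/-- A partition: a weakly decreasing, finitely supported sequence of naturals. -/
def IsPartition (f : ℕ → ℕ) : Prop :=
  (∀ i, f (i + 1) ≤ f i) ∧ ∃ N, ∀ i, N ≤ i → f i = 0

/-- `α` is finitely supported with sum of parts equal to `d`. -/
def SumsTo (α : ℕ → ℕ) (d : ℕ) : Prop :=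
  ∃ N, (∀ i, N ≤ i → α i = 0) ∧ ∑ i ∈ Finset.range N, α i = d

/-- The skew diagram `[λ/μ] = [λ] \ [μ]`. -/
def skewDiag (lam mu : ℕ → ℕ) : Set (ℕ × ℕ) :=
  {p | mu p.1 ≤ p.2 ∧ p.2 < lam p.1}

/-- `λ/μ` is a `k`-ribbon. -/
def IsRibbon (k : ℕ) (lam mu : ℕ → ℕ) : Prop :=
  SumsTo (fun i => lam i - mu i) k ∧
  ∃ d : ℤ, {z : ℤ | ∃ p ∈ skewDiag lam mu, (p.2 : ℤ) - p.1 = z} = Set.Ico d (d + k)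

/-- Skip the index `a`. -/
def sk (a j : ℕ) : ℕ := if j < a then j else j + 1

lemma sk_strictMono (a : ℕ) : StrictMono (sk a) := by
  intro i j hij
  unfold sk
  split <;> split <;> omega

lemma range_sk (a : ℕ) (f : ℕ → ℤ) :
    Set.range (fun j => f (sk a j)) = {z : ℤ | ∃ i, i ≠ a ∧ z = f i} := by
  ext z
  simp only [Set.mem_range, Set.mem_setOf_eq]
  constructor
  · rintro ⟨j, rfl⟩
    refine ⟨sk a j, ?_, rfl⟩
    unfold sk; split <;> omega
  · rintro ⟨i, hi, rfl⟩
    rcases lt_or_ge i a with h | h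
    · exact ⟨i, by simp [sk, h]⟩
    · refine ⟨i - 1, ?_⟩
      have hsk : sk a (i - 1) = i := by unfold sk; split <;> omega
      rw [hsk]

lemma strictAnti_range_inj (f g : ℕ → ℤ) (hf : StrictAnti f) (hg : StrictAnti g)
    (h : Set.range f = Set.range g) : f = g := by
  have hf' : StrictMono (fun n => -f n) := fun a b hab => by simpa using hf hab
  have hg' : StrictMono (fun n => -g n) := fun a b hab => by simpa using hg hab
  have hr : Set.range (fun n => -f n) = Set.range (fun n => -g n) := by
    rw [show (fun n => -f n) = Neg.neg ∘ f from rfl, Set.range_comp,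
      show (fun n => -g n) = Neg.neg ∘ g from rfl, Set.range_comp, h]
  have heq := (hf'.range_inj hg').1 hr
  funext n
  have := congrFun heq n
  simpa using this

/-- The height of the ribbon (difference of the row coordinates of the squares on
the first and last occupied diagonals) equals `i₀ - i₁`. -/
theorem ribbon_height (k i₀ i₁ : ℕ) (hk : 0 < k) (lam mu : ℕ → ℕ)
    (hl : IsPartition lam) (hm : IsPartition mu) (hsub : ∀ i, mu i ≤ lam i)
    (hrib : IsRibbon k lam mu)
    (hsets : {z : ℤ | ∃ i : ℕ, i ≠ i₀ ∧ z = (mu i : ℤ) - 1 - i} =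
      {z : ℤ | ∃ i : ℕ, i ≠ i₁ ∧ z = (lam i : ℤ) - 1 - i})
    (hjump : ((mu i₀ : ℤ) - 1 - i₀) + k = (lam i₁ : ℤ) - 1 - i₁)
    (p q : ℕ × ℕ) (hp : p ∈ skewDiag lam mu) (hq : q ∈ skewDiag lam mu)
    (hpmin : ∀ r ∈ skewDiag lam mu, (p.2 : ℤ) - p.1 ≤ (r.2 : ℤ) - r.1)
    (hqmax : ∀ r ∈ skewDiag lam mu, (r.2 : ℤ) - r.1 ≤ (q.2 : ℤ) - q.1) :
    (p.1 : ℤ) - q.1 = (i₀ : ℤ) - i₁ := by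
  have hmanti : Antitone mu := antitone_nat_of_succ_le hm.1
  have hlanti : Antitone lam := antitone_nat_of_succ_le hl.1
  -- strict antitonicity of the shifted sequences
  have hmu : ∀ a b : ℕ, a < b → (mu b : ℤ) - 1 - b < (mu a : ℤ) - 1 - a := by
    intro a b hab
    have := hmanti hab.le
    omega
  have hla : ∀ a b : ℕ, a < b → (lam b : ℤ) - 1 - b < (lam a : ℤ) - 1 - a := by
    intro a b hab
    have := hlanti hab.le
    omega
  -- the key identity from the set equality
  have key : ∀ j : ℕ, (mu (sk i₀ j) : ℤ) - 1 - (sk i₀ j) =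
      (lam (sk i₁ j) : ℤ) - 1 - (sk i₁ j) := by
    have hF : StrictAnti (fun j => (mu (sk i₀ j) : ℤ) - 1 - (sk i₀ j)) :=
      fun a b hab => hmu _ _ (sk_strictMono i₀ hab)
    have hG : StrictAnti (fun j => (lam (sk i₁ j) : ℤ) - 1 - (sk i₁ j)) :=
      fun a b hab => hla _ _ (sk_strictMono i₁ hab)
    have h1 := range_sk i₀ (fun i => (mu i : ℤ) - 1 - i)
    have h2 := range_sk i₁ (fun i => (lam i : ℤ) - 1 - i)
    have hr : Set.range (fun j => (mu (sk i₀ j) : ℤ) - 1 - (sk i₀ j)) =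
        Set.range (fun j => (lam (sk i₁ j) : ℤ) - 1 - (sk i₁ j)) := by
      rw [h1, h2]; exact hsets
    intro j
    exact congrFun (strictAnti_range_inj _ _ hF hG hr) j
  -- i₁ ≤ i₀
  have h10 : i₁ ≤ i₀ := by
    by_contra h
    push_neg at h  -- i₀ < i₁
    have hk0 := key i₀
    have e1 : sk i₀ i₀ = i₀ + 1 := by unfold sk; split <;> omega
    have e2 : sk i₁ i₀ = i₀ := by unfold sk; split <;> omega
    rw [e1, e2] at hk0
    have h1 := hmu i₀ (i₀ + 1) (by omega)
    have h2 := hsub i₀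
    omega
  -- rows outside [i₁, i₀] are empty
  have hA : ∀ i, i₀ < i → lam i = mu i := by
    intro i hi
    have hk0 := key (i - 1)
    have e1 : sk i₀ (i - 1) = i := by unfold sk; split <;> omega
    have e2 : sk i₁ (i - 1) = i := by unfold sk; split <;> omega
    rw [e1, e2] at hk0
    omega
  have hA2 : ∀ i, i < i₁ → lam i = mu i := by
    intro i hi
    have hk0 := key i
    have e1 : sk i₀ i = i := by unfold sk; split <;> omega
    have e2 : sk i₁ i = i := by unfold sk; split <;> omega
    rw [e1, e2] at hk0
    omega
  -- interior rows
  have hB : ∀ i, i₁ ≤ i → i < i₀ → (lam (i + 1) : ℤ) - 1 - (i + 1) = (mu i : ℤ) - 1 - i := by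
    intro i hi1 hi0
    have hk0 := key i
    have e1 : sk i₀ i = i := by unfold sk; split <;> omega
    have e2 : sk i₁ i = i + 1 := by unfold sk; split <;> omega
    rw [e1, e2] at hk0
    omega
  -- row i₀ is nonempty
  have hC : mu i₀ < lam i₀ := by
    rcases eq_or_lt_of_le h10 with heq | hlt
    · subst heq
      omega
    · have hb := hB (i₀ - 1) (by omega) (by omega)
      have h1 := hmu (i₀ - 1) i₀ (by omega)
      have e : i₀ - 1 + 1 = i₀ := by omega
      rw [e] at hb
      omega
  -- row i₁ is nonempty
  have hD : mu i₁ < lam i₁ := by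
    rcases eq_or_lt_of_le h10 with heq | hlt
    · subst heq
      omega
    · have hb := hB i₁ (le_refl _) hlt
      have h1 := hla i₁ (i₁ + 1) (by omega)
      omega
  -- p.1 = i₀
  obtain ⟨hp1, hp2⟩ := hp
  obtain ⟨hq1, hq2⟩ := hq
  have hple : p.1 ≤ i₀ := by
    by_contra h
    push_neg at h
    have := hA p.1 h
    omega
  have hpmin0 : (p.2 : ℤ) - p.1 ≤ (mu i₀ : ℤ) - i₀ :=
    hpmin (i₀, mu i₀) ⟨le_refl _, hC⟩
  have hpge : i₀ ≤ p.1 := by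
    by_contra h
    push_neg at h
    have := hmu p.1 i₀ h
    omega
  -- q.1 = i₁
  have hqge : i₁ ≤ q.1 := by
    by_contra h
    push_neg at h
    have := hA2 q.1 h
    omega
  have hr1 : (i₁, lam i₁ - 1) ∈ skewDiag lam mu :=
    ⟨(by omega : mu i₁ ≤ lam i₁ - 1), (by omega : lam i₁ - 1 < lam i₁)⟩
  have hqmax0 : ((lam i₁ - 1 : ℕ) : ℤ) - i₁ ≤ (q.2 : ℤ) - q.1 := hqmax _ hr1
  have hqle : q.1 ≤ i₁ := by
    by_contra h
    push_neg at h
    have := hla i₁ q.1 h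
    omega
  omega
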